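/- arXiv:1903.00825 — 2 statements merged into one kernel-verified Lean document; each statement's English description precedes it below -/
import Mathlib

section
/- Let k ≥ 2 be an integer and let w₁, w₂ be nonzero vectors in ℝ^k such that the angle between w₁ and w₂ is at least α for some α ∈ [0, π], and ‖w₁‖/‖w₂‖ ≤ L for some L ≥ 1. Then ‖w₁ + w₂‖ ≤ (1 - α²/(16L))‖w₁‖ + ‖w₂‖. -/
set_option maxHeartbeats 1000000 in
theorem stmt0 (k : ℕ) (hk : 2 ≤ k)
    (w₁ w₂ : EuclideanSpace ℝ (Fin k)) (hw₁ : w₁ ≠ 0) (hw₂ : w₂ ≠ 0)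
    (α L : ℝ) (hα0 : 0 ≤ α) (hαπ : α ≤ Real.pi) (hL : 1 ≤ L)
    (hangle : α ≤ InnerProductGeometry.angle w₁ w₂) (hratio : ‖w₁‖ / ‖w₂‖ ≤ L) :
    ‖w₁ + w₂‖ ≤ (1 - α ^ 2 / (16 * L)) * ‖w₁‖ + ‖w₂‖ := by
  set a := ‖w₁‖ with ha
  set b := ‖w₂‖ with hb
  have ha0 : 0 < a := norm_pos_iff.mpr hw₁
  have hb0 : 0 < b := norm_pos_iff.mpr hw₂
  have hL0 : (0:ℝ) < L := by linarith
  set ε : ℝ := α ^ 2 / (16 * L) with hε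
  have hπ : 0 < Real.pi := Real.pi_pos
  have hε0 : 0 ≤ ε := by positivity
  have hε1 : ε < 1 := by
    rw [hε, div_lt_one (by positivity)]
    nlinarith [Real.pi_lt_d2, sq_nonneg α, mul_le_mul_of_nonneg_left hL (sq_nonneg α)]
  have hab : a ≤ L * b := by
    rw [div_le_iff₀ hb0] at hratio; linarith
  -- bound on cos of the angle
  have hθπ := InnerProductGeometry.angle_le_pi w₁ w₂
  have hcosθ : Real.cos (InnerProductGeometry.angle w₁ w₂) ≤ Real.cos α :=
    Real.cos_le_cos_of_nonneg_of_le_pi hα0 hθπ hangle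
  have hsin : α / Real.pi ≤ Real.sin (α / 2) := by
    have := Real.mul_le_sin (x := α / 2) (by linarith) (by linarith)
    calc α / Real.pi = 2 / Real.pi * (α / 2) := by field_simp
    _ ≤ Real.sin (α / 2) := this
  have hcosα : Real.cos α ≤ 1 - 2 * (α / Real.pi) ^ 2 := by
    have h2 : Real.cos α = 1 - 2 * Real.sin (α / 2) ^ 2 := by
      have h := Real.cos_two_mul (α / 2)
      have h' := Real.sin_sq_add_cos_sq (α / 2)
      rw [show 2 * (α / 2) = α by ring] at h
      linarith
    rw [h2]
    have hsin0 : (0:ℝ) ≤ Real.sin (α / 2) :=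
      Real.sin_nonneg_of_nonneg_of_le_pi (by linarith) (by linarith)
    have h3 : (α / Real.pi) ^ 2 ≤ Real.sin (α / 2) ^ 2 := by
      apply sq_le_sq' _ hsin
      have : (0:ℝ) ≤ α / Real.pi := div_nonneg hα0 hπ.le
      linarith
    linarith
  have hkey : Real.cos (InnerProductGeometry.angle w₁ w₂) ≤ 1 - 2 * ε * L := by
    have hπ16 : Real.pi ^ 2 ≤ 16 := by nlinarith [Real.pi_lt_d2]
    have hεL : ε * L = α ^ 2 / 16 := by
      rw [hε]; field_simp
    have h16 : α ^ 2 / 16 ≤ α ^ 2 / Real.pi ^ 2 :=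
      div_le_div_of_nonneg_left (sq_nonneg α) (by positivity) hπ16
    have : 2 * ε * L ≤ 2 * (α / Real.pi) ^ 2 := by
      rw [div_pow]; nlinarith
    linarith
  have hinner : (inner ℝ w₁ w₂ : ℝ) ≤ (1 - 2 * ε * L) * (a * b) := by
    rw [← InnerProductGeometry.cos_angle_mul_norm_mul_norm]
    exact mul_le_mul_of_nonneg_right hkey (by positivity)
  have hsq : ‖w₁ + w₂‖ ^ 2 ≤ ((1 - ε) * a + b) ^ 2 := by
    rw [norm_add_sq_real, ← ha, ← hb]
    have h1 : ε * a * a ≤ ε * a * (L * b) :=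
      mul_le_mul_of_nonneg_left hab (mul_nonneg hε0 ha0.le)
    nlinarith [hinner, h1, sq_nonneg (ε * a),
      mul_nonneg (mul_nonneg (mul_nonneg hε0 (sub_nonneg.mpr hL)) ha0.le) hb0.le]
  have hrhs : 0 ≤ (1 - ε) * a + b := by nlinarith
  nlinarith [norm_nonneg (w₁ + w₂), sq_nonneg (‖w₁ + w₂‖ - ((1 - ε) * a + b))]
end

section
/- Let H be a complex Hilbert space, I a finite nonempty index set of size n, (U_i)_{i∈I} linear isometries of H, and (w_i)_{i∈I} positive reals with w_i ≤ C·w_j for all i, j ∈ I, for some C ≥ 1. Let φ ∈ H with ‖φ‖ = 1, and suppose there exist i₀, j₀ ∈ I and ε ∈ (0,1) such that Re⟨U_{j₀}* U_{i₀} φ, φ⟩ ≤ 1 − ε²/2. Then ‖Σ_{i∈I} w_i U_i φ‖² ≤ (1 − ε²/(2 C² n²)) (Σ_{i∈I} w_i)². -/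
theorem stmt10 (H : Type*) [NormedAddCommGroup H] [InnerProductSpace ℂ H] [CompleteSpace H]
    (I : Type*) [Fintype I] [Nonempty I]
    (U : I → (H ≃ₗᵢ[ℂ] H)) (w : I → ℝ) (hw : ∀ i, 0 < w i)
    (C : ℝ) (hC : 1 ≤ C) (hwC : ∀ i j, w i ≤ C * w j)
    (φ : H) (hφ : ‖φ‖ = 1) (ε : ℝ) (hε0 : 0 < ε) (hε1 : ε < 1)
    (i₀ j₀ : I) (hij : (inner ℂ (U i₀ φ) (U j₀ φ) : ℂ).re ≤ 1 - ε ^ 2 / 2) :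
    ‖∑ i : I, (w i : ℂ) • (U i φ)‖ ^ 2
      ≤ (1 - ε ^ 2 / (2 * C ^ 2 * (Fintype.card I : ℝ) ^ 2)) * (∑ i : I, w i) ^ 2 := by
  classical
  set n : ℝ := (Fintype.card I : ℝ) with hn
  have hn1 : 1 ≤ n := by
    rw [hn]
    exact_mod_cast Nat.one_le_iff_ne_zero.mpr Fintype.card_ne_zero
  have hnorm : ∀ i, ‖U i φ‖ = 1 := fun i => by simp [hφ]
  have hre : ∀ i j, (inner ℂ (U i φ) (U j φ) : ℂ).re ≤ 1 := fun i j => by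
    have := re_inner_le_norm (𝕜 := ℂ) (U i φ) (U j φ)
    rwa [hnorm, hnorm, one_mul] at this
  -- expand the norm squared
  have key : ‖∑ i : I, (w i : ℂ) • (U i φ)‖ ^ 2
      = ∑ p : I × I, w p.1 * w p.2 * (inner ℂ (U p.1 φ) (U p.2 φ) : ℂ).re := by
    rw [← inner_self_eq_norm_sq (𝕜 := ℂ)]
    rw [sum_inner]
    simp only [inner_sum, inner_smul_left, inner_smul_right, Complex.conj_ofReal,
      map_sum, Complex.re_sum]
    rw [← Finset.sum_product']
    refine Finset.sum_congr rfl fun p _ => ?_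
    simp [Complex.mul_re, Complex.ofReal_re, Complex.ofReal_im]
    ring
  set S : ℝ := ∑ i, w i with hS
  have hSpos : 0 < S := Finset.sum_pos (fun i _ => hw i) Finset.univ_nonempty
  -- decompose double sum
  have hmem : ((i₀, j₀) : I × I) ∈ (Finset.univ : Finset (I × I)) := Finset.mem_univ _
  have hsplit : ∀ f : I × I → ℝ, ∑ p : I × I, f p
      = f (i₀, j₀) + ∑ p ∈ Finset.univ.erase (i₀, j₀), f p := by
    intro f
    exact (Finset.add_sum_erase _ f hmem).symm
  have hprod : ∑ p : I × I, w p.1 * w p.2 = S * S := by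
    rw [hS, Finset.sum_mul_sum, ← Finset.sum_product', Finset.univ_product_univ]
  have hbound : ∑ p : I × I, w p.1 * w p.2 * (inner ℂ (U p.1 φ) (U p.2 φ) : ℂ).re
      ≤ S * S - ε ^ 2 / 2 * (w i₀ * w j₀) := by
    rw [hsplit, ← hprod, hsplit fun p => w p.1 * w p.2]
    have h1 : w i₀ * w j₀ * (inner ℂ (U i₀ φ) (U j₀ φ) : ℂ).re
        ≤ w i₀ * w j₀ * (1 - ε ^ 2 / 2) := by
      apply mul_le_mul_of_nonneg_left hij (le_of_lt (mul_pos (hw i₀) (hw j₀)))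
    have h2 : ∑ p ∈ Finset.univ.erase (i₀, j₀),
        w p.1 * w p.2 * (inner ℂ (U p.1 φ) (U p.2 φ) : ℂ).re
        ≤ ∑ p ∈ Finset.univ.erase (i₀, j₀), w p.1 * w p.2 := by
      refine Finset.sum_le_sum fun p _ => ?_
      have := mul_le_mul_of_nonneg_left (hre p.1 p.2)
        (le_of_lt (mul_pos (hw p.1) (hw p.2)))
      simpa using this
    nlinarith [h1, h2]
  -- relate w i₀ * w j₀ to S²
  have hSle : ∀ k : I, S ≤ n * C * w k := by
    intro k
    calc S = ∑ i, w i := rfl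
      _ ≤ ∑ _i : I, C * w k := Finset.sum_le_sum fun i _ => hwC i k
      _ = n * (C * w k) := by rw [Finset.sum_const, nsmul_eq_mul]; simp [hn, Finset.card_univ]
      _ = n * C * w k := by ring
  have hCn : 0 < C ^ 2 * n ^ 2 := by positivity
  have hwlb : S ^ 2 ≤ C ^ 2 * n ^ 2 * (w i₀ * w j₀) := by
    have h1 := hSle i₀
    have h2 := hSle j₀
    nlinarith [hSpos, hw i₀, hw j₀, mul_pos (mul_pos (lt_of_lt_of_le one_pos hn1)
      (lt_of_lt_of_le one_pos hC)) (hw i₀)]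
  rw [key]
  have hfinal : ε ^ 2 / (2 * C ^ 2 * n ^ 2) * S ^ 2 ≤ ε ^ 2 / 2 * (w i₀ * w j₀) := by
    rw [div_mul_eq_mul_div, div_le_iff₀ (by positivity)]
    have : ε ^ 2 * S ^ 2 ≤ ε ^ 2 * (C ^ 2 * n ^ 2 * (w i₀ * w j₀)) :=
      mul_le_mul_of_nonneg_left hwlb (by positivity)
    nlinarith [this]
  nlinarith [hbound, hfinal]
end
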